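/- For the linear scalar case f(w) = cw, one full discrete over-relaxation step S₂ maps the state (w_i, z_i)_{i∈ℤ} so that the quantity y_i := z_i - c w_i satisfies, to leading order, backward propagation: explicitly, if w_i^n = W and y_i^n = Y(x_i) with W constant and Y affine, then y_i^{n+1} = Y(x_i + cΔt). -/
import Mathlib


/-- Discrete shift transport sub-step `T(Δt/4)` on grid data. -/
noncomputable def discreteT (lam : ℝ) : (ℤ → ℝ) × (ℤ → ℝ) → (ℤ → ℝ) × (ℤ → ℝ) :=
  fun p =>
    (fun i => (p.1 (i - 1) + p.1 (i + 1)) / 2 + (p.2 (i - 1) - p.2 (i + 1)) / (2 * lam),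
     fun i => (p.2 (i - 1) + p.2 (i + 1)) / 2 + lam * (p.1 (i - 1) - p.1 (i + 1)) / 2)

/-- Pointwise over-relaxation for the linear flux `f(w) = c w`. -/
def discreteR (c : ℝ) : (ℤ → ℝ) × (ℤ → ℝ) → (ℤ → ℝ) × (ℤ → ℝ) :=
  fun p => (p.1, fun i => 2 * c * p.1 i - p.2 i)

/-- The discrete over-relaxation scheme. -/
noncomputable def discreteS₂ (lam c : ℝ) : (ℤ → ℝ) × (ℤ → ℝ) → (ℤ → ℝ) × (ℤ → ℝ) :=
  discreteT lam ∘ discreteR c ∘ discreteT lam ∘ discreteT lam ∘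
    discreteR c ∘ discreteT lam

set_option maxHeartbeats 2000000 in
theorem flux_error_backward_propagation (c lam Δx a b W : ℝ) (hlam : 0 < lam)
    (hΔx : 0 < Δx) (Δt : ℝ) (hΔt : Δt = 4 * Δx / lam)
    (Y : ℝ → ℝ) (hY : ∀ x, Y x = a + b * x)
    (w z : ℤ → ℝ)
    (hw : ∀ i : ℤ, w i = W)
    (hz : ∀ i : ℤ, z i = c * W + Y ((i : ℝ) * Δx)) :
    ∀ i : ℤ,
      (discreteS₂ lam c (w, z)).2 i - c * (discreteS₂ lam c (w, z)).1 i =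
        Y ((i : ℝ) * Δx + c * Δt) := by
  intro i
  have hl := hlam.ne'
  simp only [discreteS₂, discreteT, discreteR, Function.comp_apply, hw, hz, hY, hΔt]
  push_cast
  field_simp
  ring
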